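/- Let n ≥ 2, g ≥ 1 and let d, r be integers with r ≥ 1. If d^2 - (n-2)·d·r + (n-1)·(g-1)·r^2 < 0 then g - 1 < d/r < n - g; in particular d/r < n - 1. -/
import Mathlib

theorem bogomolov_unstable_slope_range (n g d r : ℤ) (hn : 2 ≤ n) (hg : 1 ≤ g)
    (hr : 1 ≤ r)
    (h : (d : ℝ) ^ 2 - ((n : ℝ) - 2) * d * r + ((n : ℝ) - 1) * ((g : ℝ) - 1) * r ^ 2 < 0) :
    ((g : ℝ) - 1 < (d : ℝ) / r ∧ (d : ℝ) / r < (n : ℝ) - g) ∧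
      (d : ℝ) / r < (n : ℝ) - 1 := by
  have hr' : (0:ℝ) < r := by exact_mod_cast hr
  have hg' : (1:ℝ) ≤ g := by exact_mod_cast hg
  have hn' : (2:ℝ) ≤ n := by exact_mod_cast hn
  have hgi : (0:ℝ) ≤ ((g:ℝ)-1)*((g:ℝ)-2) := by
    rcases le_or_gt g 1 with hx | hx
    · have : g = 1 := le_antisymm hx hg
      simp [this]
    · have : (2:ℝ) ≤ g := by exact_mod_cast hx
      nlinarith
  have h1 : ((g:ℝ)-1)*r < d := by
    by_contra hc
    push_neg at hc
    have ht : (0:ℝ) ≤ ((g:ℝ)-1)*r - d := by linarith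
    rcases le_or_gt (2*(g:ℝ)) n with hcase | hcase
    · nlinarith [mul_nonneg (mul_nonneg ht (by linarith : (0:ℝ) ≤ (n:ℝ) - 2*g)) hr'.le,
        mul_nonneg (mul_nonneg (by linarith : (0:ℝ) ≤ (g:ℝ)) (by linarith : (0:ℝ) ≤ (g:ℝ)-1)) (sq_nonneg (r:ℝ))]
    · nlinarith [sq_nonneg (2*(((g:ℝ)-1)*r - d) - (2*(g:ℝ)-n)*r),
        mul_nonneg (mul_nonneg (by linarith : (0:ℝ) ≤ (n:ℝ)-2) (by linarith : (0:ℝ) ≤ 4*(g:ℝ)-2-n)) (sq_nonneg (r:ℝ)),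
        mul_nonneg (by linarith : (0:ℝ) ≤ 4*(g:ℝ)-4) (sq_nonneg (r:ℝ))]
  have h2 : (d:ℝ) < ((n:ℝ)-g)*r := by
    by_contra hc
    push_neg at hc
    have hs : (0:ℝ) ≤ d - ((n:ℝ)-g)*r := by linarith
    rcases le_or_gt (2*(g:ℝ)) (n+2) with hcase | hcase
    · nlinarith [mul_nonneg (mul_nonneg hs (by linarith : (0:ℝ) ≤ (n:ℝ)+2-2*g)) hr'.le,
        mul_nonneg hgi (sq_nonneg (r:ℝ)),
        mul_nonneg (by linarith : (0:ℝ) ≤ (n:ℝ)-1) (sq_nonneg (r:ℝ))]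
    · nlinarith [sq_nonneg (2*((d:ℝ) - ((n:ℝ)-g)*r) + ((n:ℝ)-2*g+2)*r),
        mul_nonneg (mul_nonneg (by linarith : (0:ℝ) ≤ (n:ℝ)-2) (by linarith : (0:ℝ) ≤ 2*(g:ℝ)-2-n)) (sq_nonneg (r:ℝ)),
        mul_nonneg (by nlinarith : (0:ℝ) ≤ 2*(g:ℝ)*n-4) (sq_nonneg (r:ℝ))]
  have hA : ((g:ℝ)-1) < (d:ℝ)/r := by rw [lt_div_iff₀ hr']; linarith
  have hB : (d:ℝ)/r < (n:ℝ)-g := by rw [div_lt_iff₀ hr']; linarith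
  exact ⟨⟨hA, hB⟩, by linarith⟩
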